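/- Let n ≥ 1 and 0 ≤ m ≤ n be natural numbers, and let A be an n×n complex matrix with rank A = n − m. In the polynomial ring MvPolynomial (Fin n × Fin n) ℂ, let P := det( M ), where M is the n×n matrix over this polynomial ring with entries M i j = C (A i j) + X (i,j). Then every monomial in the support of P has total degree ≥ m, and the support of P contains a monomial of total degree exactly m; that is, the minimal total degree of a monomial occurring in P equals m (the corank of A). -/

import Mathlib

open MvPolynomial Finset Matrix Module

noncomputable section AuxMultDet

lemma aeval_deg_bound {σ τ : Type*} [DecidableEq σ] [DecidableEq τ]
    (f : σ → MvPolynomial τ ℂ) (hf : ∀ s, (f s).IsHomogeneous 1)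
    (q : MvPolynomial σ ℂ) (m : ℕ) (hq : ∀ e ∈ q.support, m ≤ e.degree) :
    ∀ e ∈ (aeval f q).support, m ≤ e.degree := by
  intro e he
  conv at he => rw [q.as_sum, map_sum]
  obtain ⟨d, hd, he⟩ := Finset.mem_biUnion.1 (MvPolynomial.support_sum he)
  have hprod : (d.prod fun s k => f s ^ k).IsHomogeneous d.degree := by
    have h1 : ∀ s ∈ d.support, (f s ^ d s).IsHomogeneous (d s) := fun s _ => by
      simpa using (hf s).pow (d s)
    simpa [Finsupp.degree_apply, Finsupp.prod] using IsHomogeneous.prod d.support _ _ h1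
  have hhom : (aeval f (monomial d (coeff d q))).IsHomogeneous (0 + d.degree) := by
    rw [aeval_monomial]
    exact (isHomogeneous_C τ _).mul hprod
  have := hhom (MvPolynomial.mem_support_iff.1 he)
  rw [show (Finsupp.weight 1 : (τ →₀ ℕ) →+ ℕ) = Finsupp.degree from
    Finsupp.degree_eq_weight_one.symm] at this
  rw [zero_add] at this
  rw [this]
  exact hq d hd



lemma exists_rank_normal_form (n : ℕ) (A : Matrix (Fin n) (Fin n) ℂ) :
    ∃ B C : Matrix (Fin n) (Fin n) ℂ, IsUnit B.det ∧ IsUnit C.det ∧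
      A = B * (Matrix.of fun i j : Fin n =>
        if i = j ∧ (i : ℕ) < A.rank then (1:ℂ) else 0) * C := by
  classical
  set r := A.rank with hr
  have hrn : r ≤ n := by simpa using A.rank_le_card_width
  set f : (Fin n → ℂ) →ₗ[ℂ] (Fin n → ℂ) := Matrix.mulVecLin A with hf
  obtain ⟨W, hW⟩ := (LinearMap.ker f).exists_isCompl
  obtain ⟨U, hU⟩ := (LinearMap.range f).exists_isCompl
  have hdim : finrank ℂ (LinearMap.range f) + finrank ℂ (LinearMap.ker f) = n := by
    rw [LinearMap.finrank_range_add_finrank_ker f]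
    simp [finrank_pi]
  have hranger : finrank ℂ (LinearMap.range f) = r := rfl
  have hkerm : finrank ℂ (LinearMap.ker f) = n - r := by omega
  have hWr : finrank ℂ W = r := by
    have := Submodule.finrank_add_eq_of_isCompl hW
    rw [finrank_pi] at this
    simp only [Fintype.card_fin] at this
    omega
  have hUm : finrank ℂ U = n - r := by
    have := Submodule.finrank_add_eq_of_isCompl hU
    rw [finrank_pi] at this
    simp only [Fintype.card_fin] at this
    omega
  -- the restriction of f to W, as an equiv onto the range
  let g0 : W →ₗ[ℂ] LinearMap.range f :=
    LinearMap.codRestrict (LinearMap.range f) (f.domRestrict W)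
      (fun w => LinearMap.mem_range_self f (w : Fin n → ℂ))
  have hbij : Function.Bijective g0 := by
    constructor
    · intro x y hxy
      have hmem : ((x - y : W) : Fin n → ℂ) ∈ LinearMap.ker f := by
        simp only [LinearMap.mem_ker]
        have : f x = f y := congrArg Subtype.val hxy
        simp [map_sub, this]
      have h0 : ((x - y : W) : Fin n → ℂ) = 0 :=
        Submodule.disjoint_def.1 hW.disjoint _ hmem (x - y).2
      have : (x - y : W) = 0 := Subtype.ext h0
      exact sub_eq_zero.1 this
    · rintro ⟨y, x, rfl⟩
      have hx : x ∈ LinearMap.ker f ⊔ W := by rw [hW.sup_eq_top]; trivial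
      obtain ⟨k, hk, w, hw, hx⟩ := Submodule.mem_sup.1 hx
      refine ⟨⟨w, hw⟩, Subtype.ext ?_⟩
      have hk0 : f k = 0 := hk
      simp [g0, ← hx, map_add, hk0]
      rfl
  let g : W ≃ₗ[ℂ] LinearMap.range f := LinearEquiv.ofBijective g0 hbij
  let bW : Basis (Fin r) ℂ W := finBasisOfFinrankEq ℂ W hWr
  let bK : Basis (Fin (n-r)) ℂ (LinearMap.ker f) := finBasisOfFinrankEq ℂ _ hkerm
  let bU : Basis (Fin (n-r)) ℂ U := finBasisOfFinrankEq ℂ U hUm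
  let bR : Basis (Fin r) ℂ (LinearMap.range f) := bW.map g
  let v : Basis (Fin r ⊕ Fin (n-r)) ℂ (Fin n → ℂ) :=
    (bW.prod bK).map (Submodule.prodEquivOfIsCompl W (LinearMap.ker f) hW.symm)
  let w : Basis (Fin r ⊕ Fin (n-r)) ℂ (Fin n → ℂ) :=
    (bR.prod bU).map (Submodule.prodEquivOfIsCompl _ U hU)
  have hv_inl : ∀ i, v (Sum.inl i) = (bW i : Fin n → ℂ) := by
    intro i
    simp [v, Basis.map_apply, Basis.prod_apply, Submodule.coe_prodEquivOfIsCompl']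
  have hv_inr : ∀ i, v (Sum.inr i) = (bK i : Fin n → ℂ) := by
    intro i
    simp [v, Basis.map_apply, Basis.prod_apply, Submodule.coe_prodEquivOfIsCompl']
  have hw_inl : ∀ i, w (Sum.inl i) = (bR i : Fin n → ℂ) := by
    intro i
    simp [w, Basis.map_apply, Basis.prod_apply, Submodule.coe_prodEquivOfIsCompl']
  -- the matrix of f in the adapted bases
  have hM : LinearMap.toMatrix v w f =
      Matrix.fromBlocks (1 : Matrix (Fin r) (Fin r) ℂ) 0 0 0 := by
    ext i j
    rw [LinearMap.toMatrix_apply]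
    cases j with
    | inr jr =>
      have : f (v (Sum.inr jr)) = 0 := by
        rw [hv_inr]; exact (bK jr).2
      rw [this, map_zero]
      cases i <;> simp [Matrix.fromBlocks]
    | inl jl =>
      have hfv : f (v (Sum.inl jl)) = w (Sum.inl jl) := by
        rw [hv_inl, hw_inl]
        rfl
      rw [hfv, Basis.repr_self]
      cases i with
      | inl il =>
        by_cases h : il = jl
        · subst h; simp [Finsupp.single_apply, Matrix.fromBlocks, Matrix.one_apply]
        · simp [Finsupp.single_apply, Matrix.fromBlocks, Matrix.one_apply, h,
            fun hh : jl = il => h hh.symm]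
      | inr ir => simp [Finsupp.single_apply, Matrix.fromBlocks]
  -- change of basis
  let eb : Basis (Fin n) ℂ (Fin n → ℂ) := Pi.basisFun ℂ (Fin n)
  have hA' : A = LinearMap.toMatrix eb eb f := by
    rw [show (LinearMap.toMatrix eb eb : ((Fin n → ℂ) →ₗ[ℂ] (Fin n → ℂ)) ≃ₗ[ℂ] _)
        = LinearMap.toMatrix' from LinearMap.toMatrix_eq_toMatrix', hf,
      ← Matrix.toLin'_apply', LinearMap.toMatrix'_toLin']
  let B' := LinearMap.toMatrix w eb (LinearMap.id : (Fin n → ℂ) →ₗ[ℂ] (Fin n → ℂ))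
  let C' := LinearMap.toMatrix eb v (LinearMap.id : (Fin n → ℂ) →ₗ[ℂ] (Fin n → ℂ))
  let B'' := LinearMap.toMatrix eb w (LinearMap.id : (Fin n → ℂ) →ₗ[ℂ] (Fin n → ℂ))
  let C'' := LinearMap.toMatrix v eb (LinearMap.id : (Fin n → ℂ) →ₗ[ℂ] (Fin n → ℂ))
  have hdecomp : B' * LinearMap.toMatrix v w f * C' = A := by
    rw [hA', Matrix.mul_assoc,
      ← LinearMap.toMatrix_comp eb v w f LinearMap.id,
      ← LinearMap.toMatrix_comp eb w eb LinearMap.id (f.comp LinearMap.id)]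
    simp
  have hBB : B' * B'' = 1 := by
    rw [show B' * B'' = LinearMap.toMatrix eb eb (LinearMap.id.comp LinearMap.id) from
      (LinearMap.toMatrix_comp eb w eb _ _).symm]
    simp
  have hCC : C'' * C' = 1 := by
    rw [show C'' * C' = LinearMap.toMatrix eb eb (LinearMap.id.comp LinearMap.id) from
      (LinearMap.toMatrix_comp eb v eb _ _).symm]
    simp
  -- reindex
  let q : (Fin r ⊕ Fin (n - r)) ≃ Fin n :=
    finSumFinEquiv.trans (finCongr (by omega))
  have hq_inl : ∀ x : Fin r, ((q (Sum.inl x) : Fin n) : ℕ) = (x : ℕ) := by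
    intro x; simp [q]
  have hq_inr : ∀ x : Fin (n - r), ((q (Sum.inr x) : Fin n) : ℕ) = r + (x : ℕ) := by
    intro x; simp [q]
  let B := B'.submatrix id q.symm
  let D := (LinearMap.toMatrix v w f).submatrix q.symm q.symm
  let C := C'.submatrix q.symm id
  refine ⟨B, C, ?_, ?_, ?_⟩
  · have h1 : B * B''.submatrix q.symm id = 1 := by
      rw [show B * B''.submatrix q.symm id = (B' * B'').submatrix id id from
        Matrix.submatrix_mul_equiv B' B'' id q.symm id, hBB]
      simp
    exact IsUnit.of_mul_eq_one _ (by
      rw [← Matrix.det_one (n := Fin n), ← h1, Matrix.det_mul])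
  · have h1 : C''.submatrix id q.symm * C = 1 := by
      rw [show C''.submatrix id q.symm * C = (C'' * C').submatrix id id from
        Matrix.submatrix_mul_equiv C'' C' id q.symm id, hCC]
      simp
    exact IsUnit.of_mul_eq_one _ (by
      rw [mul_comm, ← Matrix.det_mul, h1, Matrix.det_one])
  · have hD : (Matrix.of fun i j : Fin n =>
        if i = j ∧ (i : ℕ) < A.rank then (1:ℂ) else 0) = D := by
      ext i j
      simp only [Matrix.of_apply, D, Matrix.submatrix_apply, hM]
      have hi : i = q (q.symm i) := (q.apply_symm_apply i).symm
      have hj : j = q (q.symm j) := (q.apply_symm_apply j).symm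
      rcases hqi : q.symm i with x | x <;> rcases hqj : q.symm j with y | y
      · have hiv : (i : ℕ) = (x : ℕ) := by rw [hi, hqi, hq_inl]
        have hij : (i = j) ↔ (x = y) := by
          rw [hi, hj, hqi, hqj, q.apply_eq_iff_eq, Sum.inl.injEq]
        by_cases hxy : x = y
        · simp [Matrix.fromBlocks, hij, hxy, hiv, ← hr, x.2, Matrix.one_apply]
        · simp [Matrix.fromBlocks, Matrix.one_apply, hxy, hij]
      · have hij : ¬ (i = j) := by
          rw [hi, hj, hqi, hqj, q.apply_eq_iff_eq]
          simp
        simp [Matrix.fromBlocks, hij]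
      · have hiv : (i : ℕ) = r + (x : ℕ) := by rw [hi, hqi, hq_inr]
        have : ¬ ((i : ℕ) < A.rank) := by rw [hiv, ← hr]; omega
        simp [Matrix.fromBlocks, this]
      · have hiv : (i : ℕ) = r + (x : ℕ) := by rw [hi, hqi, hq_inr]
        have : ¬ ((i : ℕ) < A.rank) := by rw [hiv, ← hr]; omega
        simp [Matrix.fromBlocks, this]
    rw [hD]
    have h2 : B * D * C = (B' * LinearMap.toMatrix v w f * C').submatrix id id := by
      rw [show B * D = (B' * LinearMap.toMatrix v w f).submatrix id q.symm from
        Matrix.submatrix_mul_equiv B' _ id q.symm q.symm]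
      exact Matrix.submatrix_mul_equiv _ C' id q.symm id
    rw [h2]
    simpa using hdecomp.symm



lemma degree_add' {σ : Type*} (a b : σ →₀ ℕ) : (a+b).degree = a.degree + b.degree := by
  classical
  simp [Finsupp.degree_eq_weight_one]

lemma degree_single' {σ : Type*} (a : σ) : (Finsupp.single a (1:ℕ)).degree = 1 := by
  classical
  rw [Finsupp.degree_apply, Finsupp.support_single_ne_zero _ one_ne_zero]
  simp

lemma degree_sum_single {σ ι : Type*} (s : Finset ι) (g : ι → σ) :
    (∑ i ∈ s, Finsupp.single (g i) (1:ℕ)).degree = s.card := by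
  classical
  induction s using Finset.induction_on with
  | empty => simp
  | @insert a s ha ih => rw [Finset.sum_insert ha, degree_add', degree_single', ih,
      Finset.card_insert_of_notMem ha, add_comm]

lemma prod_X_single {σ ι : Type*} (s : Finset ι) (g : ι → σ) :
    (∏ i ∈ s, (X (g i) : MvPolynomial σ ℂ)) =
      monomial (∑ i ∈ s, Finsupp.single (g i) 1) 1 := by
  classical
  induction s using Finset.induction_on with
  | empty => simp
  | @insert a s ha ih =>
    rw [Finset.prod_insert ha, Finset.sum_insert ha, ih,
      show (X (g a) : MvPolynomial σ ℂ) = monomial (Finsupp.single (g a) 1) 1 from rfl,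
      monomial_mul, one_mul]

lemma support_sum_single {σ ι : Type*} [DecidableEq σ] [DecidableEq ι]
    (s : Finset ι) (g : ι → σ) (hg : Function.Injective g) :
    (∑ i ∈ s, Finsupp.single (g i) (1:ℕ)).support = s.image g := by
  rw [Finsupp.support_sum_eq_biUnion]
  · simp only [Finsupp.support_single_ne_zero _ (one_ne_zero)]
    exact Finset.biUnion_singleton
  · intro i j hij
    simp only [Finsupp.support_single_ne_zero _ (one_ne_zero)]
    simp [(hg.ne hij).symm]
    exact hg.ne hij

lemma card_filter_lt' (n r : ℕ) (h : r ≤ n) :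
    (univ.filter fun i : Fin n => (i : ℕ) < r).card = r := by
  rw [show (univ.filter fun i : Fin n => (i : ℕ) < r)
      = (Finset.range r).attachFin (fun m hm => (Finset.mem_range.1 hm).trans_le h) from
    Finset.ext fun i => by simp [Finset.mem_attachFin],
    Finset.card_attachFin, Finset.card_range]

lemma card_filter_le' (n r : ℕ) (h : r ≤ n) :
    (univ.filter fun i : Fin n => r ≤ (i : ℕ)).card = n - r := by
  classical
  have h2 := Finset.card_filter_add_card_filter_not
    (s := (univ : Finset (Fin n))) (p := fun i : Fin n => (i : ℕ) < r)
  simp only [not_lt, Finset.card_univ, Fintype.card_fin, card_filter_lt' n r h] at h2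
  omega

-- the product-support degree bound
lemma deg_prod_bound {σ ι : Type*} [DecidableEq σ] (s : Finset ι)
    (g : ι → MvPolynomial σ ℂ) (c : ι → ℕ)
    (h : ∀ i ∈ s, ∀ e ∈ (g i).support, c i ≤ e.degree) :
    ∀ e ∈ (∏ i ∈ s, g i).support, (∑ i ∈ s, c i) ≤ e.degree := by
  classical
  induction s using Finset.induction_on with
  | empty => intro e he; simp
  | @insert a s ha ih =>
    intro e he
    rw [Finset.prod_insert ha] at he
    obtain ⟨u, hu, v, hv, rfl⟩ := Finset.mem_add.1 (support_mul _ _ he)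
    rw [Finset.sum_insert ha, degree_add']
    exact Nat.add_le_add (h a (mem_insert_self _ _) u hu)
      (ih (fun i hi => h i (mem_insert_of_mem hi)) v hv)

lemma Q_support_deg (n r : ℕ) (hrn : r ≤ n) :
    ∀ e ∈ ((Matrix.of fun i j : Fin n =>
        (C (if i = j ∧ (i : ℕ) < r then (1:ℂ) else 0)
          + X (i, j) : MvPolynomial (Fin n × Fin n) ℂ)).det).support,
      n - r ≤ e.degree := by
  classical
  intro e he
  rw [Matrix.det_apply] at he
  obtain ⟨σ, -, he⟩ := Finset.mem_biUnion.1 (MvPolynomial.support_sum he)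
  have he' := MvPolynomial.support_smul he
  set c : Fin n → ℕ := fun i => if σ i = i ∧ (i : ℕ) < r then 0 else 1 with hc
  have hfac : ∀ i ∈ (univ : Finset (Fin n)),
      ∀ e' ∈ ((Matrix.of fun i j : Fin n =>
        (C (if i = j ∧ (i : ℕ) < r then (1:ℂ) else 0) + X (i, j))) (σ i) i).support,
      c i ≤ e'.degree := by
    intro i _ e' he'
    by_cases hcase : σ i = i ∧ (i : ℕ) < r
    · simp [hc, hcase]
    · have hD : (if σ i = i ∧ ((σ i : Fin n) : ℕ) < r then (1:ℂ) else 0) = 0 := by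
        rw [if_neg]
        rintro ⟨h1, h2⟩
        exact hcase ⟨h1, by rwa [h1] at h2⟩
      simp only [Matrix.of_apply, hD, map_zero, zero_add] at he'
      rw [MvPolynomial.support_X] at he'
      rw [Finset.mem_singleton.1 he']
      simp [hc, hcase, degree_single']
  have hbound := deg_prod_bound univ _ c hfac e he'
  refine le_trans ?_ hbound
  have hsum : (∑ i, c i) = (univ.filter fun i : Fin n => ¬(σ i = i ∧ (i : ℕ) < r)).card := by
    rw [Finset.card_filter]
    refine Finset.sum_congr rfl fun i _ => ?_
    by_cases hcase : σ i = i ∧ (i : ℕ) < r <;> simp [hc, hcase]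
  have h2 := Finset.card_filter_add_card_filter_not
    (s := (univ : Finset (Fin n))) (p := fun i : Fin n => σ i = i ∧ (i : ℕ) < r)
  have h3 : (univ.filter fun i : Fin n => σ i = i ∧ (i : ℕ) < r).card ≤ r := by
    refine le_trans (Finset.card_le_card ?_) (card_filter_lt' n r hrn).le
    intro i hi
    simp only [Finset.mem_filter] at hi ⊢
    exact ⟨hi.1, hi.2.2⟩
  simp only [Finset.card_univ, Fintype.card_fin] at h2
  omega

lemma Q_coeff_det (n r : ℕ) :
    coeff (∑ i ∈ univ.filter (fun i : Fin n => r ≤ (i : ℕ)),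
        Finsupp.single ((i, i) : Fin n × Fin n) 1)
      ((Matrix.of fun i j : Fin n =>
        (C (if i = j ∧ (i : ℕ) < r then (1:ℂ) else 0)
          + X (i, j) : MvPolynomial (Fin n × Fin n) ℂ)).det) = 1 := by
  classical
  set tr : Finset (Fin n) := univ.filter (fun i : Fin n => r ≤ (i : ℕ)) with htr
  set e₀ : Fin n × Fin n →₀ ℕ := ∑ i ∈ tr, Finsupp.single ((i, i) : Fin n × Fin n) 1 with he₀
  -- coefficient of each permutation term
  have key : ∀ σ : Equiv.Perm (Fin n),
      coeff e₀ (∏ i, (C (if σ i = i ∧ ((σ i : Fin n) : ℕ) < r then (1:ℂ) else 0)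
        + X ((σ i, i) : Fin n × Fin n))) = if σ = 1 then 1 else 0 := by
    intro σ
    set d : Fin n → ℂ := fun i => if σ i = i ∧ ((σ i : Fin n) : ℕ) < r then (1:ℂ) else 0 with hd
    have hcond : ∀ t : Finset (Fin n),
        ((∑ i ∈ t, Finsupp.single ((σ i, i) : Fin n × Fin n) 1) = e₀)
          ↔ (t = tr ∧ ∀ i ∈ tr, σ i = i) := by
      intro t
      constructor
      · intro h
        have hinj : Function.Injective (fun i : Fin n => ((σ i, i) : Fin n × Fin n)) :=
          fun a b hab => congrArg Prod.snd hab
        have hinj2 : Function.Injective (fun i : Fin n => ((i, i) : Fin n × Fin n)) :=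
          fun a b hab => congrArg Prod.snd hab
        have hsupp := congrArg Finsupp.support h
        rw [he₀, support_sum_single t _ hinj, support_sum_single tr _ hinj2] at hsupp
        have ht : t = tr := by
          have h2 := congrArg (Finset.image Prod.snd) hsupp
          rwa [Finset.image_image, Finset.image_image,
            show (Prod.snd ∘ fun i : Fin n => ((σ i, i) : Fin n × Fin n)) = id from rfl,
            show (Prod.snd ∘ fun i : Fin n => ((i, i) : Fin n × Fin n)) = id from rfl,
            Finset.image_id, Finset.image_id] at h2
        refine ⟨ht, fun i hi => ?_⟩
        have hmem : ((i, i) : Fin n × Fin n) ∈ t.image (fun i => ((σ i, i) : Fin n × Fin n)) := by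
          rw [hsupp]
          exact Finset.mem_image_of_mem _ hi
        obtain ⟨j, hj, hji⟩ := Finset.mem_image.1 hmem
        have hji2 : j = i := congrArg Prod.snd hji
        have hji1 : σ j = i := congrArg Prod.fst hji
        rw [← hji2, hji1, hji2]
      · rintro ⟨rfl, hfix⟩
        rw [he₀]
        exact Finset.sum_congr rfl fun i hi => by rw [hfix i hi]
    rw [Finset.prod_add, coeff_sum]
    have hterm : ∀ t ∈ (univ : Finset (Fin n)).powerset,
        coeff e₀ ((∏ i ∈ t, C (d i)) * ∏ i ∈ univ \ t, X ((σ i, i) : Fin n × Fin n))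
          = if t = univ \ tr ∧ ∀ i ∈ tr, σ i = i then (∏ i ∈ t, d i) else 0 := by
      intro t ht
      rw [prod_X_single (univ \ t) (fun i => ((σ i, i) : Fin n × Fin n)),
        show (∏ i ∈ t, C (d i) : MvPolynomial (Fin n × Fin n) ℂ)
          = C (∏ i ∈ t, d i) from (map_prod (C : ℂ →+* MvPolynomial (Fin n × Fin n) ℂ) _ _).symm,
        coeff_C_mul, coeff_monomial]
      by_cases hc : (∑ i ∈ univ \ t, Finsupp.single ((σ i, i) : Fin n × Fin n) 1) = e₀
      · obtain ⟨h1, h2⟩ := (hcond (univ \ t)).1 hc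
        have ht' : t = univ \ tr := by
          rw [← h1, Finset.sdiff_sdiff_eq_self (Finset.mem_powerset.1 ht)]
        rw [if_pos hc, if_pos ⟨ht', h2⟩, mul_one]
      · rw [if_neg hc, if_neg, mul_zero]
        rintro ⟨h1, h2⟩
        refine hc ((hcond (univ \ t)).2 ⟨?_, h2⟩)
        rw [h1, Finset.sdiff_sdiff_eq_self (Finset.filter_subset _ _)]
    rw [Finset.sum_congr rfl hterm]
    by_cases hσ : ∀ i ∈ tr, σ i = i
    · have hsum : ∑ t ∈ (univ : Finset (Fin n)).powerset,
          (if t = univ \ tr ∧ ∀ i ∈ tr, σ i = i then (∏ i ∈ t, d i) else 0)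
          = ∏ i ∈ univ \ tr, d i := by
        rw [Finset.sum_congr rfl (fun t _ =>
          if_congr (and_iff_left hσ) rfl rfl)]
        rw [Finset.sum_ite_eq' _ (univ \ tr) (fun t => ∏ i ∈ t, d i)]
        simp
      rw [hsum]
      by_cases h1 : σ = 1
      · subst h1
        rw [if_pos rfl]
        refine Finset.prod_eq_one fun i hi => ?_
        have hlt : ¬ r ≤ (i : ℕ) := by
          simp only [htr, Finset.mem_sdiff, Finset.mem_filter, Finset.mem_univ,
            true_and] at hi
          exact hi
        have h1i : ((1 : Equiv.Perm (Fin n)) i) = i := rfl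
        simp only [hd, h1i, true_and, eq_self_iff_true, if_pos]
        rw [if_pos (by omega : (i : ℕ) < r)]
      · rw [if_neg h1]
        obtain ⟨i, hi⟩ : ∃ i, σ i ≠ i := by
          by_contra hcon
          push_neg at hcon
          exact h1 (Equiv.ext hcon)
        have hmem : i ∈ univ \ tr := by
          simp only [htr, Finset.mem_sdiff, Finset.mem_filter, Finset.mem_univ, true_and]
          intro hri
          exact hi (hσ i (by simp [htr, hri]))
        refine Finset.prod_eq_zero hmem ?_
        simp [hd, hi]
    · have h1 : σ ≠ 1 := fun h => hσ (by simp [h])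
      rw [if_neg h1]
      refine Finset.sum_eq_zero fun t _ => ?_
      rw [if_neg (fun hcon => hσ hcon.2)]
  -- assemble
  rw [Matrix.det_apply, coeff_sum]
  rw [Finset.sum_eq_single (1 : Equiv.Perm (Fin n))]
  · simp only [coeff_smul]
    rw [show (∏ i, (Matrix.of fun i j : Fin n =>
        (C (if i = j ∧ (i : ℕ) < r then (1:ℂ) else 0) + X ((i, j) : Fin n × Fin n)))
          ((1 : Equiv.Perm (Fin n)) i) i)
      = ∏ i, (C (if (1 : Equiv.Perm (Fin n)) i = i
            ∧ (((1 : Equiv.Perm (Fin n)) i : Fin n) : ℕ) < r then (1:ℂ) else 0)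
          + X (((1 : Equiv.Perm (Fin n)) i, i) : Fin n × Fin n)) from rfl]
    rw [key 1, if_pos rfl]
    simp
  · intro σ _ hσ
    simp only [coeff_smul]
    rw [show (∏ i, (Matrix.of fun i j : Fin n =>
        (C (if i = j ∧ (i : ℕ) < r then (1:ℂ) else 0) + X ((i, j) : Fin n × Fin n)))
          (σ i) i)
      = ∏ i, (C (if σ i = i ∧ ((σ i : Fin n) : ℕ) < r then (1:ℂ) else 0)
          + X ((σ i, i) : Fin n × Fin n)) from rfl]
    rw [key σ, if_neg hσ]
    simp
  · intro h
    exact absurd (Finset.mem_univ _) h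

lemma entry_homog (n : ℕ) (B C₂ : Matrix (Fin n) (Fin n) ℂ) (s : Fin n × Fin n) :
    (((B.map (C : ℂ → MvPolynomial (Fin n × Fin n) ℂ)) *
      (Matrix.of fun i j : Fin n => (X (i,j) : MvPolynomial (Fin n × Fin n) ℂ)) *
      (C₂.map (C : ℂ → MvPolynomial (Fin n × Fin n) ℂ))) s.1 s.2).IsHomogeneous 1 := by
  obtain ⟨a, b⟩ := s
  rw [Matrix.mul_apply]
  apply IsHomogeneous.sum
  intro j _
  rw [Matrix.mul_apply, Finset.sum_mul]
  apply IsHomogeneous.sum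
  intro k _
  have h1 := ((isHomogeneous_C (Fin n × Fin n) (B a k)).mul
    (isHomogeneous_X ℂ ((k, j) : Fin n × Fin n))).mul
    (isHomogeneous_C (Fin n × Fin n) (C₂ j b))
  simpa [Matrix.map_apply, Matrix.of_apply] using h1

end AuxMultDet

lemma matrix_map_mul_alghom {n : ℕ}
    (g : MvPolynomial (Fin n × Fin n) ℂ →ₐ[ℂ] MvPolynomial (Fin n × Fin n) ℂ)
    (M N : Matrix (Fin n) (Fin n) (MvPolynomial (Fin n × Fin n) ℂ)) :
    (M * N).map ⇑g = (M.map ⇑g) * (N.map ⇑g) := by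
  apply Matrix.ext
  intro i j
  simp [Matrix.mul_apply, Matrix.map_apply, map_sum]

/-- The multiplicity of the determinant hypersurface `det H = 0` at a matrix point `A`
equals the corank of `A`: the minimal total degree of a monomial occurring in
`det (C (A i j) + X (i,j))` equals `m = n - rank A`. -/
theorem multiplicity_det_eq_corank
    (n m : ℕ) (hn : 1 ≤ n) (hm : m ≤ n)
    (A : Matrix (Fin n) (Fin n) ℂ) (hA : A.rank = n - m)
    (P : MvPolynomial (Fin n × Fin n) ℂ)
    (hP : P = (Matrix.of fun i j : Fin n =>
      (C (A i j) + X (i, j) : MvPolynomial (Fin n × Fin n) ℂ)).det) :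
    (∀ e ∈ P.support, m ≤ e.sum fun _ k => k) ∧
      ∃ e ∈ P.support, (e.sum fun _ k => k) = m := by
  classical
  have hrn : n - m ≤ n := Nat.sub_le n m
  have hnr : n - (n - m) = m := by omega
  obtain ⟨B, C₂, huB, huC, hfac⟩ := exists_rank_normal_form n A
  rw [hA] at hfac
  set D : Matrix (Fin n) (Fin n) ℂ :=
    Matrix.of fun i j : Fin n => if i = j ∧ (i : ℕ) < n - m then (1:ℂ) else 0 with hD
  set Xm : Matrix (Fin n) (Fin n) (MvPolynomial (Fin n × Fin n) ℂ) :=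
    Matrix.of fun i j : Fin n => X (i, j) with hXm
  set N : Matrix (Fin n) (Fin n) (MvPolynomial (Fin n × Fin n) ℂ) :=
    Matrix.of fun i j : Fin n =>
      (C (A i j) + X (i, j) : MvPolynomial (Fin n × Fin n) ℂ) with hN
  set Qmat : Matrix (Fin n) (Fin n) (MvPolynomial (Fin n × Fin n) ℂ) :=
    Matrix.of fun i j : Fin n =>
      (C (if i = j ∧ (i : ℕ) < n - m then (1:ℂ) else 0)
        + X (i, j) : MvPolynomial (Fin n × Fin n) ℂ) with hQmat
  set Bp : Matrix (Fin n) (Fin n) (MvPolynomial (Fin n × Fin n) ℂ) :=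
    B.map (C : ℂ → MvPolynomial (Fin n × Fin n) ℂ) with hBp
  set Cp : Matrix (Fin n) (Fin n) (MvPolynomial (Fin n × Fin n) ℂ) :=
    C₂.map (C : ℂ → MvPolynomial (Fin n × Fin n) ℂ) with hCp
  set Bip : Matrix (Fin n) (Fin n) (MvPolynomial (Fin n × Fin n) ℂ) :=
    B⁻¹.map (C : ℂ → MvPolynomial (Fin n × Fin n) ℂ) with hBip
  set Cip : Matrix (Fin n) (Fin n) (MvPolynomial (Fin n × Fin n) ℂ) :=
    C₂⁻¹.map (C : ℂ → MvPolynomial (Fin n × Fin n) ℂ) with hCip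
  set fφ : Fin n × Fin n → MvPolynomial (Fin n × Fin n) ℂ :=
    fun s => (Bp * Xm * Cp) s.1 s.2 with hfφ
  set fψ : Fin n × Fin n → MvPolynomial (Fin n × Fin n) ℂ :=
    fun s => (Bip * Xm * Cip) s.1 s.2 with hfψ
  have hφhom : ∀ s, (fφ s).IsHomogeneous 1 := fun s => entry_homog n B C₂ s
  have hψhom : ∀ s, (fψ s).IsHomogeneous 1 := fun s => entry_homog n B⁻¹ C₂⁻¹ s
  have hBB : B * B⁻¹ = 1 := Matrix.mul_nonsing_inv B huB
  have hCC : C₂⁻¹ * C₂ = 1 := Matrix.nonsing_inv_mul C₂ huC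
  -- the image of N under φ
  have hDXm : D.map (C : ℂ → MvPolynomial (Fin n × Fin n) ℂ) + Xm = Qmat := by
    apply Matrix.ext
    intro i j
    simp [Matrix.map_apply, hD, hXm, hQmat]
  have hNφ : N.map ⇑(aeval fφ : MvPolynomial (Fin n × Fin n) ℂ →ₐ[ℂ]
        MvPolynomial (Fin n × Fin n) ℂ)
      = Bp * (D.map (C : ℂ → MvPolynomial (Fin n × Fin n) ℂ)) * Cp + Bp * Xm * Cp := by
    apply Matrix.ext
    intro i j
    simp only [Matrix.map_apply, hN, Matrix.of_apply, map_add, aeval_C,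
      MvPolynomial.algebraMap_eq, Matrix.add_apply]
    congr 1
    · rw [hBp, hCp, ← Matrix.map_mul (f := (C : ℂ →+* MvPolynomial (Fin n × Fin n) ℂ)),
        ← Matrix.map_mul (f := (C : ℂ →+* MvPolynomial (Fin n × Fin n) ℂ)),
        ← hfac, Matrix.map_apply]
    · rw [aeval_X]
  have hNφ' : N.map ⇑(aeval fφ : MvPolynomial (Fin n × Fin n) ℂ →ₐ[ℂ]
        MvPolynomial (Fin n × Fin n) ℂ) = Bp * Qmat * Cp := by
    rw [hNφ, ← hDXm, Matrix.mul_add, Matrix.add_mul]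
  have hQfac : aeval fφ N.det = C (B.det * C₂.det) * Qmat.det := by
    rw [AlgHom.map_det,
      show (aeval fφ : MvPolynomial (Fin n × Fin n) ℂ →ₐ[ℂ]
        MvPolynomial (Fin n × Fin n) ℂ).mapMatrix N
        = N.map ⇑(aeval fφ) from rfl,
      hNφ', Matrix.det_mul, Matrix.det_mul, hBp, hCp,
      show B.map ⇑(C : ℂ →+* MvPolynomial (Fin n × Fin n) ℂ)
        = (C : ℂ →+* MvPolynomial (Fin n × Fin n) ℂ).mapMatrix B from rfl,
      show C₂.map ⇑(C : ℂ →+* MvPolynomial (Fin n × Fin n) ℂ)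
        = (C : ℂ →+* MvPolynomial (Fin n × Fin n) ℂ).mapMatrix C₂ from rfl,
      ← RingHom.map_det (C : ℂ →+* MvPolynomial (Fin n × Fin n) ℂ) B,
      ← RingHom.map_det (C : ℂ →+* MvPolynomial (Fin n × Fin n) ℂ) C₂]
    rw [_root_.map_mul C B.det C₂.det]
    ring
  -- ψ inverts φ
  have hcomp : ∀ p : MvPolynomial (Fin n × Fin n) ℂ, aeval fψ (aeval fφ p) = p := by
    have hBmap : Bp.map ⇑(aeval fψ : MvPolynomial (Fin n × Fin n) ℂ →ₐ[ℂ]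
        MvPolynomial (Fin n × Fin n) ℂ) = Bp := by
      apply Matrix.ext
      intro i j
      simp [hBp, Matrix.map_apply, MvPolynomial.algebraMap_eq]
    have hCmap : Cp.map ⇑(aeval fψ : MvPolynomial (Fin n × Fin n) ℂ →ₐ[ℂ]
        MvPolynomial (Fin n × Fin n) ℂ) = Cp := by
      apply Matrix.ext
      intro i j
      simp [hCp, Matrix.map_apply, MvPolynomial.algebraMap_eq]
    have hXmap : Xm.map ⇑(aeval fψ : MvPolynomial (Fin n × Fin n) ℂ →ₐ[ℂ]
        MvPolynomial (Fin n × Fin n) ℂ) = Bip * Xm * Cip := by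
      apply Matrix.ext
      intro i j
      show aeval fψ (Xm i j) = (Bip * Xm * Cip) i j
      have hx : Xm i j = X (i, j) := rfl
      rw [hx, aeval_X]
    have he1 : Bp * Bip = 1 := by
      rw [hBp, hBip,
        ← Matrix.map_mul (f := (C : ℂ →+* MvPolynomial (Fin n × Fin n) ℂ)), hBB]
      exact Matrix.map_one _ (map_zero C) (map_one C)
    have he2 : Cip * Cp = 1 := by
      rw [hCp, hCip,
        ← Matrix.map_mul (f := (C : ℂ →+* MvPolynomial (Fin n × Fin n) ℂ)), hCC]
      exact Matrix.map_one _ (map_zero C) (map_one C)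
    have hid : (aeval fψ).comp (aeval fφ)
        = AlgHom.id ℂ (MvPolynomial (Fin n × Fin n) ℂ) := by
      apply algHom_ext
      intro s
      obtain ⟨a, b⟩ := s
      simp only [AlgHom.comp_apply, aeval_X, AlgHom.id_apply]
      have h1 : aeval fψ (fφ (a, b))
          = ((Bp * Xm * Cp).map ⇑(aeval fψ : MvPolynomial (Fin n × Fin n) ℂ →ₐ[ℂ]
            MvPolynomial (Fin n × Fin n) ℂ)) a b := rfl
      rw [h1, matrix_map_mul_alghom, matrix_map_mul_alghom, hBmap, hCmap, hXmap]
      have h3 : Bp * (Bip * Xm * Cip) * Cp = Xm := by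
        calc Bp * (Bip * Xm * Cip) * Cp
            = (Bp * Bip) * (Xm * (Cip * Cp)) := by
              simp only [Matrix.mul_assoc]
          _ = Xm := by rw [he1, he2, Matrix.one_mul, Matrix.mul_one]
      rw [h3]
      rfl
    intro p
    calc aeval fψ (aeval fφ p) = ((aeval fψ).comp (aeval fφ)) p := rfl
      _ = p := by rw [hid]; rfl
  set u : ℂ := B.det * C₂.det with hu
  have hu0 : u ≠ 0 := (huB.mul huC).ne_zero
  have hsub : ∀ e, e ∈ (C u * Qmat.det).support → e ∈ Qmat.det.support := by
    intro e he
    rw [MvPolynomial.mem_support_iff, coeff_C_mul] at he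
    rw [MvPolynomial.mem_support_iff]
    exact fun h => he (by rw [h, mul_zero])
  have hQlow : ∀ e ∈ Qmat.det.support, m ≤ e.degree := by
    intro e he
    have := Q_support_deg n (n - m) hrn e he
    omega
  have hCuQ : ∀ e ∈ (C u * Qmat.det).support, m ≤ e.degree :=
    fun e he => hQlow e (hsub e he)
  have hPrw : P = aeval fψ (C u * Qmat.det) := by
    rw [← hQfac, hcomp, hP]
  have part1 : ∀ e ∈ P.support, m ≤ e.degree := by
    rw [hPrw]
    exact aeval_deg_bound fψ hψhom _ m hCuQ
  refine ⟨part1, ?_⟩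
  by_contra hcon
  push_neg at hcon
  have h1 : ∀ e ∈ P.support, m + 1 ≤ e.degree := by
    intro e he
    have h2 := part1 e he
    have h4 : e.degree ≠ m := hcon e he
    omega
  have h2 := aeval_deg_bound fφ hφhom P (m + 1) h1
  set e₀ : Fin n × Fin n →₀ ℕ :=
    ∑ i ∈ univ.filter (fun i : Fin n => n - m ≤ (i : ℕ)),
      Finsupp.single ((i, i) : Fin n × Fin n) 1 with he₀
  have he₀deg : e₀.degree = m := by
    rw [he₀, degree_sum_single, card_filter_le' n (n - m) hrn, hnr]
  have he₀mem : e₀ ∈ (aeval fφ P).support := by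
    rw [hP, hQfac, MvPolynomial.mem_support_iff, coeff_C_mul, Q_coeff_det n (n - m), mul_one]
    exact hu0
  have hfin := h2 e₀ he₀mem
  rw [he₀deg] at hfin
  omega
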